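/- arXiv:1204.1788 — 3 statements merged into one kernel-verified Lean document; each statement's English description precedes it below -/
import Mathlib

section
/- If a sequence of convex functions u_i on a bounded open set Ω ⊂ ℝⁿ converges locally uniformly to a convex function u, then for every compact set E ⊂ Ω, limsup_{i→∞} μ[u_i](E) ≤ μ[u](E), where μ[v](E) denotes the Lebesgue measure of the subdifferential image N_v(E). -/
open Set MeasureTheory Filter RealInnerProductSpace Topology

/-- The normal mapping (subdifferential) of `u` relative to `Ω` at `x`. -/
def normalMap {n : ℕ} (Ω : Set (EuclideanSpace ℝ (Fin n)))
    (u : EuclideanSpace ℝ (Fin n) → ℝ) (x : EuclideanSpace ℝ (Fin n)) :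
    Set (EuclideanSpace ℝ (Fin n)) :=
  {p | ∀ y ∈ Ω, u x + ⟪p, y - x⟫ ≤ u y}

theorem stmt_1 {n : ℕ} (Ω : Set (EuclideanSpace ℝ (Fin n)))
    (hΩo : IsOpen Ω) (hΩb : Bornology.IsBounded Ω)
    (u : ℕ → EuclideanSpace ℝ (Fin n) → ℝ) (v : EuclideanSpace ℝ (Fin n) → ℝ)
    (hui : ∀ i, ConvexOn ℝ Ω (u i)) (hv : ConvexOn ℝ Ω v)
    (hconv : TendstoLocallyUniformlyOn u v atTop Ω)
    (E : Set (EuclideanSpace ℝ (Fin n))) (hE : E ⊆ Ω) (hEc : IsCompact E) :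
    limsup (fun i => volume (⋃ x ∈ E, normalMap Ω (u i) x)) atTop ≤
      volume (⋃ x ∈ E, normalMap Ω v x) := by
  rcases E.eq_empty_or_nonempty with rfl | hEne
  · simp
  -- a compact neighborhood K of E inside Ω
  obtain ⟨δ, hδ, hthick⟩ := hEc.exists_thickening_subset_open hΩo hE
  set K := Metric.cthickening (δ / 2) E with hKdef
  have hKc : IsCompact K := hEc.cthickening
  have hKΩ : K ⊆ Ω :=
    (Metric.cthickening_subset_thickening' hδ (half_lt_self hδ) E).trans hthick
  have hEK : E ⊆ K := Metric.self_subset_cthickening E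
  -- continuity of v on Ω
  have hvc : ContinuousOn v Ω := hv.continuousOn hΩo
  -- uniform convergence on K
  have hKuc : TendstoUniformlyOn u v atTop K :=
    (tendstoLocallyUniformlyOn_iff_tendstoUniformlyOn_of_compact hKc).mp (hconv.mono hKΩ)
  -- bound for v on K
  obtain ⟨C, hC⟩ := hKc.exists_bound_of_continuousOn (hvc.mono hKΩ)
  have hC0 : 0 ≤ C := by
    obtain ⟨x, hx⟩ := hEne
    exact (norm_nonneg _).trans (hC x (hEK hx))
  -- eventual closeness on K
  have hev : ∀ᶠ i in atTop, ∀ x ∈ K, dist (v x) (u i x) < 1 :=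
    (Metric.tendstoUniformlyOn_iff.mp hKuc) 1 one_pos
  set M := (2 * C + 2) / (δ / 2) with hM
  have hM0 : 0 ≤ M := div_nonneg (by linarith) (by linarith)
  -- uniform bound on normal maps
  have hbound : ∀ i, (∀ x ∈ K, dist (v x) (u i x) < 1) →
      (⋃ x ∈ E, normalMap Ω (u i) x) ⊆ Metric.closedBall 0 M := by
    intro i hi p hp
    simp only [mem_iUnion] at hp
    obtain ⟨x, hxE, hpx⟩ := hp
    rw [Metric.mem_closedBall, dist_zero_right]
    rcases eq_or_ne p 0 with rfl | hp0
    · simpa using hM0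
    · set c : ℝ := (δ / 2) * ‖p‖⁻¹ with hc
      set y := x + c • p with hy
      have hnc : ‖y - x‖ = δ / 2 := by
        have : y - x = c • p := by rw [hy]; abel
        have hpn : ‖p‖ ≠ 0 := norm_ne_zero_iff.mpr hp0
        rw [this, norm_smul, Real.norm_eq_abs, abs_of_nonneg (by positivity), hc]
        field_simp
      have hyK : y ∈ K := by
        apply Metric.mem_cthickening_of_dist_le y x (δ / 2) E hxE
        rw [dist_eq_norm, hnc]
      have hyΩ : y ∈ Ω := hKΩ hyK
      have hineq := hpx y hyΩ
      have hinner : ⟪p, y - x⟫ = (δ / 2) * ‖p‖ := by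
        have h1 : y - x = c • p := by rw [hy]; abel
        rw [h1, real_inner_smul_right, real_inner_self_eq_norm_sq, hc]
        have : ‖p‖ ≠ 0 := norm_ne_zero_iff.mpr hp0
        field_simp
      have hux : v x - 1 ≤ u i x := by
        have := hi x (hEK hxE)
        rw [Real.dist_eq, abs_lt] at this
        linarith [this.2]
      have huy : u i y ≤ v y + 1 := by
        have := hi y hyK
        rw [Real.dist_eq, abs_lt] at this
        linarith [this.1]
      have hvx : ‖v x‖ ≤ C := hC x (hEK hxE)
      have hvy : ‖v y‖ ≤ C := hC y hyK
      rw [Real.norm_eq_abs, abs_le] at hvx hvy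
      have key : (δ / 2) * ‖p‖ ≤ 2 * C + 2 := by
        rw [hinner] at hineq; linarith [hvx.1, hvy.2]
      rw [hM, le_div_iff₀ (by linarith)]
      linarith [key]
  -- the decreasing sequence of closures
  set A : ℕ → Set (EuclideanSpace ℝ (Fin n)) :=
    fun j => closure (⋃ i ∈ Ici j, ⋃ x ∈ E, normalMap Ω (u i) x) with hA
  have hAanti : Antitone A := by
    intro j k hjk
    apply closure_mono
    apply iUnion₂_subset
    intro i hi
    exact subset_iUnion₂ (s := fun i _ => ⋃ x ∈ E, normalMap Ω (u i) x) i (hjk.trans hi)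
  have hAmeas : ∀ j, NullMeasurableSet (A j) volume :=
    fun j => isClosed_closure.measurableSet.nullMeasurableSet
  -- finiteness of one of them
  obtain ⟨j₀, hj₀⟩ := eventually_atTop.mp hev
  have hAfin : volume (A j₀) ≠ ⊤ := by
    have hsub : A j₀ ⊆ Metric.closedBall 0 M := by
      rw [hA]
      apply closure_minimal _ Metric.isClosed_closedBall
      apply iUnion₂_subset
      intro i hi
      exact hbound i (hj₀ i hi)
    exact ((measure_mono hsub).trans_lt
      (isCompact_closedBall (0 : EuclideanSpace ℝ (Fin n)) M).measure_lt_top).ne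
  -- the key inclusion: the limit set is inside the normal map of v
  have hkey : (⋂ j, A j) ⊆ ⋃ x ∈ E, normalMap Ω v x := by
    intro p hp
    rw [mem_iInter] at hp
    -- choose approximating points
    have hchoice : ∀ j : ℕ, ∃ q, (∃ i ≥ j, ∃ x ∈ E, q ∈ normalMap Ω (u i) x) ∧
        dist p q < 1 / (j + 1) := by
      intro j
      have := hp j
      rw [hA, Metric.mem_closure_iff] at this
      obtain ⟨q, hq, hdq⟩ := this (1 / (j + 1)) (by positivity)
      simp only [mem_iUnion, mem_Ici] at hq
      obtain ⟨i, hi, x, hx, hqx⟩ := hq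
      exact ⟨q, ⟨i, hi, x, hx, hqx⟩, hdq⟩
    choose q hq hdq using hchoice
    choose i hi x hx hqmem using hq
    -- q j → p
    have hqp : Tendsto q atTop (𝓝 p) := by
      rw [tendsto_iff_dist_tendsto_zero]
      apply squeeze_zero (fun j => dist_nonneg)
        (fun j => (dist_comm (q j) p ▸ (hdq j).le))
      exact tendsto_one_div_add_atTop_nhds_zero_nat
    -- i j → ∞
    have hitop : Tendsto i atTop atTop :=
      tendsto_atTop_mono hi tendsto_id
    -- extract convergent subsequence of x
    obtain ⟨x₀, hx₀E, φ, hφ, hxφ⟩ := hEc.tendsto_subseq hx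
    refine mem_iUnion₂.mpr ⟨x₀, hx₀E, ?_⟩
    intro y hy
    -- limits along the subsequence
    have hiφ : Tendsto (fun k => i (φ k)) atTop atTop :=
      hitop.comp hφ.tendsto_atTop
    have huy : Tendsto (fun k => u (i (φ k)) y) atTop (𝓝 (v y)) :=
      (hconv.tendsto_at hy).comp hiφ
    -- uniform convergence of the subsequence on K
    have hucφ : TendstoUniformlyOn (fun k => u (i (φ k))) v atTop K :=
      fun U hU => hiφ.eventually (hKuc U hU)
    have hxφK : Tendsto (fun k => x (φ k)) atTop (𝓝[K] x₀) := by
      apply tendsto_nhdsWithin_of_tendsto_nhds_of_eventually_within _ hxφ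
      exact Eventually.of_forall fun k => hEK (hx (φ k))
    have hvcx : ContinuousWithinAt v K x₀ :=
      ((hvc.continuousAt (hΩo.mem_nhds (hE hx₀E))).continuousWithinAt)
    have hux : Tendsto (fun k => u (i (φ k)) (x (φ k))) atTop (𝓝 (v x₀)) :=
      hucφ.tendsto_comp hvcx hxφK
    have hqφ : Tendsto (fun k => q (φ k)) atTop (𝓝 p) :=
      hqp.comp hφ.tendsto_atTop
    have hxsub : Tendsto (fun k => y - x (φ k)) atTop (𝓝 (y - x₀)) :=
      tendsto_const_nhds.sub hxφ
    have hinner : Tendsto (fun k => (⟪q (φ k), y - x (φ k)⟫ : ℝ)) atTop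
        (𝓝 ⟪p, y - x₀⟫) := hqφ.inner hxsub
    have hle : ∀ k, u (i (φ k)) (x (φ k)) + ⟪q (φ k), y - x (φ k)⟫ ≤ u (i (φ k)) y :=
      fun k => hqmem (φ k) y hy
    exact le_of_tendsto_of_tendsto' (hux.add hinner) huy hle
  -- conclude via measures
  calc limsup (fun i => volume (⋃ x ∈ E, normalMap Ω (u i) x)) atTop
      ≤ ⨅ j, volume (A j) := by
        refine le_iInf fun j => ?_
        refine limsup_le_of_le (by isBoundedDefault) ?_
        filter_upwards [eventually_ge_atTop j] with i hij
        apply measure_mono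
        refine subset_trans ?_ subset_closure
        exact subset_iUnion₂ (s := fun i _ => ⋃ x ∈ E, normalMap Ω (u i) x) i hij
    _ = volume (⋂ j, A j) := (hAanti.measure_iInter hAmeas ⟨j₀, hAfin⟩).symm
    _ ≤ volume (⋃ x ∈ E, normalMap Ω v x) := measure_mono hkey
end

section
/- Let g : [−1,1] → ℝ be a convex function with g ≥ 0, g(0) = 0 and g(1) = 1, and suppose there exists θ ∈ (0,1) such that every nonnegative convex function ψ vanishing at 0 obtained as ψ(t) = g(t + 1/2) − g'(1/2)t − g(1/2) satisfies ψ(−θ⁻¹/2) ≤ 2ψ(−1/2) whenever defined. If ε < (1−θ)/5, then g(1/2) ≤ (1−ε)/2; i.e., the midpoint value of g is strictly bounded away from half of g(1). -/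
open Set

theorem stmt_6 (g : ℝ → ℝ) (hg : ConvexOn ℝ (Icc (-1:ℝ) 1) g)
    (hnn : ∀ t ∈ Icc (-1:ℝ) 1, 0 ≤ g t) (hg0 : g 0 = 0) (hg1 : g 1 = 1)
    (s : ℝ) (hs : HasDerivAt g s (1/2))
    (θ : ℝ) (hθ : θ ∈ Ioo (0:ℝ) 1) (hdom : (-1:ℝ) ≤ -θ⁻¹/2 + 1/2)
    (ψ : ℝ → ℝ) (hψ : ψ = fun t => g (t + 1/2) - s * t - g (1/2))
    (hdbl : ψ (-θ⁻¹/2) ≤ 2 * ψ (-1/2))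
    (ε : ℝ) (hε : 0 < ε) (hεθ : ε < (1 - θ)/5) :
    g (1/2) ≤ (1 - ε)/2 := by
  obtain ⟨hθ0, hθ1⟩ := hθ
  have hθinv : (1:ℝ) < θ⁻¹ := (one_lt_inv₀ hθ0).mpr hθ1
  have hmem0 : (0:ℝ) ∈ Icc (-1:ℝ) 1 := by norm_num
  have hmemh : (1/2:ℝ) ∈ Icc (-1:ℝ) 1 := by norm_num
  have hmem1 : (1:ℝ) ∈ Icc (-1:ℝ) 1 := by norm_num
  have hmemx : (-θ⁻¹/2 + 1/2 : ℝ) ∈ Icc (-1:ℝ) 1 := by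
    constructor
    · exact hdom
    · nlinarith
  -- slope bounds from derivative
  have h1 : s ≤ slope g (1/2) 1 := hg.le_slope_of_hasDerivAt hmemh hmem1 (by norm_num) hs
  have h2 : slope g 0 (1/2) ≤ s := hg.slope_le_of_hasDerivAt hmem0 hmemh (by norm_num) hs
  rw [slope_def_field] at h1 h2
  rw [hg1] at h1
  rw [hg0] at h2
  -- h1 : s ≤ (1 - g(1/2))/(1 - 1/2), h2 : (g(1/2) - 0)/(1/2 - 0) ≤ s
  have ha : s / 2 - g (1/2) ≥ 0 := by
    have := h2
    field_simp at this
    linarith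
  have hb : 1 - s / 2 - g (1/2) ≥ 0 := by
    have := h1
    field_simp at this
    linarith
  -- key inequality from doubling and nonnegativity
  have hgx : 0 ≤ g (-θ⁻¹/2 + 1/2) := hnn _ hmemx
  rw [hψ] at hdbl
  simp only at hdbl
  rw [show (-1/2 + 1/2 : ℝ) = 0 by norm_num, hg0] at hdbl
  -- hdbl : g (-θ⁻¹/2 + 1/2) - s * (-θ⁻¹/2) - g (1/2) ≤ 2 * (0 - s * (-1/2) - g (1/2))
  have key : s * (θ⁻¹/2) - g (1/2) ≤ s - 2 * g (1/2) := by nlinarith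
  -- multiply by θ
  have key2 : s / 2 - θ * g (1/2) ≤ θ * s - 2 * θ * g (1/2) := by
    have h := mul_le_mul_of_nonneg_left key hθ0.le
    have : θ * (s * (θ⁻¹/2)) = s / 2 := by
      field_simp
    nlinarith [this]
  have hm0 : 0 ≤ g (1/2) := hnn _ hmemh
  by_contra hcon
  push_neg at hcon
  -- g(1/2) > (1-ε)/2
  nlinarith [mul_pos hθ0 (sub_pos.mpr hcon), sq_nonneg (θ - 1/2), mul_nonneg hθ0.le ha, mul_nonneg hθ0.le hb, mul_nonneg hθ0.le hm0]
end

section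
/- Let u be a convex function near 0 ∈ ℝ² with C₁|x|² ≤ u(x) for all x, u(0)=0, and suppose the Monge–Ampère measure of u satisfies μ[u](E) ≤ C|E| for Borel sets E in a neighborhood of 0. Then there exists C₂ > 0 such that u(x) ≤ C₂|x|² near the origin. -/
open Set MeasureTheory Metric RealInnerProductSpace
open scoped ENNReal

set_option maxHeartbeats 4000000

theorem stmt_10 (r C₁ C : ℝ) (hr : 0 < r) (hC₁ : 0 < C₁) (hC : 0 ≤ C)
    (u : EuclideanSpace ℝ (Fin 2) → ℝ)
    (hu : ConvexOn ℝ (ball (0 : EuclideanSpace ℝ (Fin 2)) r) u) (hu0 : u 0 = 0)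
    (hlow : ∀ x ∈ ball (0 : EuclideanSpace ℝ (Fin 2)) r, C₁ * ‖x‖ ^ 2 ≤ u x)
    (hMA : ∀ E ⊆ ball (0 : EuclideanSpace ℝ (Fin 2)) r, MeasurableSet E →
      volume (⋃ x ∈ E, normalMap (ball (0 : EuclideanSpace ℝ (Fin 2)) r) u x) ≤
        ENNReal.ofReal C * volume E) :
    ∃ C₂ > (0:ℝ), ∃ ρ > (0:ℝ), ∀ x ∈ ball (0 : EuclideanSpace ℝ (Fin 2)) ρ,
      u x ≤ C₂ * ‖x‖ ^ 2 := by
  classical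
  obtain ⟨N', hN'⟩ : ∃ n : ℕ, 16 * C / C₁ ^ 2 ≤ n := ⟨⌈16 * C / C₁ ^ 2⌉₊, Nat.le_ceil _⟩
  set N : ℕ := N' + 1 with hNdef
  have hN1 : (1 : ℝ) ≤ (N : ℝ) := by exact_mod_cast Nat.one_le_iff_ne_zero.mpr (Nat.succ_ne_zero _)
  have hNpos : (0 : ℝ) < N := by linarith
  have hNbig : 16 * C / C₁ ^ 2 < (N : ℝ) := by
    have : (N' : ℝ) < (N : ℝ) := by exact_mod_cast Nat.lt_succ_self N'
    linarith
  set r₂ : ℝ := r / 2 with hr₂def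
  have hr₂ : 0 < r₂ := by positivity
  have hr₂r : r₂ < r := by rw [hr₂def]; linarith
  have hcont : ContinuousOn u (ball (0 : EuclideanSpace ℝ (Fin 2)) r) :=
    hu.continuousOn isOpen_ball
  refine ⟨4 * (N : ℝ) ^ 2 * C₁, by positivity, r₂ / (4 * (N : ℝ) ^ 2), by positivity, ?_⟩
  intro x hx
  rcases eq_or_ne x 0 with rfl | hx0
  · simp [hu0]
  by_contra hgt
  push_neg at hgt
  have hxn : 0 < ‖x‖ := norm_pos_iff.mpr hx0
  set ε : ℝ := 4 * (N : ℝ) ^ 2 * C₁ * ‖x‖ ^ 2 with hεdef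
  have hε : 0 < ε := by positivity
  set R : ℝ := 2 * (N : ℝ) * ‖x‖ with hRdef
  have hR : 0 < R := by positivity
  set ρ : ℝ := (N : ℝ) * C₁ * ‖x‖ / 2 with hρdef
  have hρ : 0 < ρ := by positivity
  have hxr₂ : ‖x‖ < r₂ / (4 * (N : ℝ) ^ 2) := by
    simpa [mem_ball_zero_iff] using hx
  have hRr₂ : R ≤ r₂ / 2 := by
    rw [hRdef]
    have h1 : 2 * (N : ℝ) * ‖x‖ ≤ 2 * (N : ℝ) * (r₂ / (4 * (N : ℝ) ^ 2)) := by
      apply mul_le_mul_of_nonneg_left hxr₂.le (by positivity)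
    have h2 : 2 * (N : ℝ) * (r₂ / (4 * (N : ℝ) ^ 2)) ≤ r₂ / 2 := by
      have he : 2 * (N : ℝ) * (r₂ / (4 * (N : ℝ) ^ 2)) = r₂ / (2 * (N : ℝ)) := by
        field_simp; ring
      rw [he]
      apply div_le_div_of_nonneg_left hr₂.le (by norm_num) (by linarith)
    linarith
  have hRr : R < r := by linarith
  -- the sublevel set
  set A : Set (EuclideanSpace ℝ (Fin 2)) :=
    {z | z ∈ closedBall (0 : EuclideanSpace ℝ (Fin 2)) r₂ ∧ u z ≤ ε} with hAdef
  have hAconv : Convex ℝ A := by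
    have := (hu.subset (closedBall_subset_ball hr₂r) (convex_closedBall _ _)).convex_le ε
    convert this using 1
  have hAclosed : IsClosed A := by
    have h := (hcont.mono (closedBall_subset_ball hr₂r)).preimage_isClosed_of_isClosed
      isClosed_closedBall (isClosed_Iic (a := ε))
    have heq : A = closedBall (0 : EuclideanSpace ℝ (Fin 2)) r₂ ∩ u ⁻¹' Iic ε := by
      ext z
      simp only [hAdef, mem_setOf_eq, mem_inter_iff, mem_preimage, mem_Iic]
    rw [heq]
    exact h
  have h0A : (0 : EuclideanSpace ℝ (Fin 2)) ∈ A :=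
    ⟨mem_closedBall_self hr₂.le, by rw [hu0]; exact hε.le⟩
  have hAnorm : ∀ z ∈ A, ‖z‖ ≤ R := by
    intro z hz
    have hzr : z ∈ ball (0 : EuclideanSpace ℝ (Fin 2)) r :=
      closedBall_subset_ball hr₂r hz.1
    have h1 : C₁ * ‖z‖ ^ 2 ≤ ε := (hlow z hzr).trans hz.2
    have h2 : ‖z‖ ^ 2 ≤ R ^ 2 := by
      rw [hRdef]; rw [hεdef] at h1; nlinarith
    exact le_of_pow_le_pow_left₀ two_ne_zero hR.le h2
  -- separation
  have hxA : x ∉ A := fun hxa => absurd hxa.2 (not_le.mpr hgt)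
  obtain ⟨f, s₀, hfA, hs₀x⟩ := geometric_hahn_banach_closed_point hAconv hAclosed hxA
  have hf0 : (0 : ℝ) < s₀ := by simpa using hfA 0 h0A
  have hfx : 0 < f x := lt_trans hf0 hs₀x
  set v : EuclideanSpace ℝ (Fin 2) := (InnerProductSpace.toDual ℝ _).symm f with hvdef
  have hvf : ∀ z, ⟪v, z⟫ = f z := fun z => InnerProductSpace.toDual_symm_apply
  have hv0 : v ≠ 0 := by
    intro h
    have := hvf x
    rw [h, inner_zero_left] at this
    exact hfx.ne this
  set w : EuclideanSpace ℝ (Fin 2) := ‖v‖⁻¹ • v with hwdef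
  have hw1 : ‖w‖ = 1 := by
    rw [hwdef, norm_smul, norm_inv, norm_norm,
      inv_mul_cancel₀ (norm_ne_zero_iff.mpr hv0)]
  have hsep : ∀ z ∈ A, ⟪w, z⟫ ≤ ‖x‖ := by
    intro z hz
    have h1 : ⟪w, z⟫ = ‖v‖⁻¹ * f z := by rw [hwdef, real_inner_smul_left, hvf]
    have h2 : ⟪w, x⟫ = ‖v‖⁻¹ * f x := by rw [hwdef, real_inner_smul_left, hvf]
    have h3 : f z ≤ f x := le_of_lt (lt_trans (hfA z hz) hs₀x)
    have h4 : ⟪w, z⟫ ≤ ⟪w, x⟫ := by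
      rw [h1, h2]
      exact mul_le_mul_of_nonneg_left h3 (inv_nonneg.mpr (norm_nonneg v))
    calc ⟪w, z⟫ ≤ ⟪w, x⟫ := h4
      _ ≤ ‖w‖ * ‖x‖ := real_inner_le_norm _ _
      _ = ‖x‖ := by rw [hw1, one_mul]
  -- key lemma: slopes supported at sublevel points
  have hkey : ∀ p : EuclideanSpace ℝ (Fin 2), ‖p‖ ≤ C₁ * r₂ / 4 →
      (∀ z ∈ A, ⟪p, z⟫ ≤ ε / 2) →
      p ∈ ⋃ y ∈ closedBall (0 : EuclideanSpace ℝ (Fin 2)) R,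
        normalMap (ball (0 : EuclideanSpace ℝ (Fin 2)) r) u y := by
    intro p hpn hpA
    set g : EuclideanSpace ℝ (Fin 2) → ℝ := fun y => u y - ⟪p, y⟫ with hgdef
    have hgconv : ConvexOn ℝ (ball (0 : EuclideanSpace ℝ (Fin 2)) r) g := by
      refine ⟨convex_ball _ _, ?_⟩
      intro a ha b hb ta tb hta htb htab
      have h1 := hu.2 ha hb hta htb htab
      simp only [hgdef, smul_eq_mul, inner_add_right, real_inner_smul_right] at h1 ⊢
      linarith
    have hgcont : ContinuousOn g (closedBall (0 : EuclideanSpace ℝ (Fin 2)) r₂) := by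
      apply ContinuousOn.sub (hcont.mono (closedBall_subset_ball hr₂r))
      exact (continuous_const.inner continuous_id).continuousOn
    obtain ⟨x', hx'cb, hmin⟩ :=
      (isCompact_closedBall (0 : EuclideanSpace ℝ (Fin 2)) r₂).exists_isMinOn
        ⟨0, mem_closedBall_self hr₂.le⟩ hgcont
    have hming : ∀ y ∈ closedBall (0 : EuclideanSpace ℝ (Fin 2)) r₂, g x' ≤ g y :=
      fun y hy => hmin hy
    have hg0 : g 0 = 0 := by simp [hgdef, hu0]
    have hgx' : g x' ≤ 0 := by
      have := hming 0 (mem_closedBall_self hr₂.le)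
      rwa [hg0] at this
    have hx'r : x' ∈ ball (0 : EuclideanSpace ℝ (Fin 2)) r :=
      closedBall_subset_ball hr₂r hx'cb
    have hx'le : ‖x'‖ ≤ r₂ := mem_closedBall_zero_iff.mp hx'cb
    have hx'lt : ‖x'‖ < r₂ := by
      rcases lt_or_eq_of_le hx'le with h | h
      · exact h
      · exfalso
        have h1 : C₁ * ‖x'‖ ^ 2 ≤ u x' := hlow x' hx'r
        have h2 : ⟪p, x'⟫ ≤ ‖p‖ * ‖x'‖ := real_inner_le_norm _ _
        have h3 : g x' = u x' - ⟪p, x'⟫ := rfl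
        rw [h] at h1 h2
        have h4 : ‖p‖ * r₂ ≤ (C₁ * r₂ / 4) * r₂ := mul_le_mul_of_nonneg_right hpn hr₂.le
        have h5 : u x' - ⟪p, x'⟫ ≤ 0 := h3 ▸ hgx'
        have h7 : 0 < C₁ * r₂ ^ 2 := by positivity
        have h8 : C₁ * r₂ / 4 * r₂ = C₁ * r₂ ^ 2 / 4 := by ring
        linarith
    have hglobal : ∀ y ∈ ball (0 : EuclideanSpace ℝ (Fin 2)) r, g x' ≤ g y := by
      intro y hy
      rcases eq_or_ne y x' with rfl | hyx
      · exact le_refl _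
      · have hd : 0 < ‖y - x'‖ := by
          rw [norm_sub_pos_iff]; exact hyx
        set t : ℝ := min ((r₂ - ‖x'‖) / ‖y - x'‖) 1 with htdef
        have ht0 : 0 < t := lt_min (div_pos (by linarith) hd) one_pos
        have ht1 : t ≤ 1 := min_le_right _ _
        have htle : t * ‖y - x'‖ ≤ r₂ - ‖x'‖ := by
          have : t ≤ (r₂ - ‖x'‖) / ‖y - x'‖ := min_le_left _ _
          calc t * ‖y - x'‖ ≤ ((r₂ - ‖x'‖) / ‖y - x'‖) * ‖y - x'‖ :=
                mul_le_mul_of_nonneg_right this hd.le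
            _ = r₂ - ‖x'‖ := div_mul_cancel₀ _ hd.ne'
        have hwpt : (1 - t) • x' + t • y ∈ closedBall (0 : EuclideanSpace ℝ (Fin 2)) r₂ := by
          rw [mem_closedBall_zero_iff]
          have heq : (1 - t) • x' + t • y = x' + t • (y - x') := by module
          rw [heq]
          calc ‖x' + t • (y - x')‖ ≤ ‖x'‖ + ‖t • (y - x')‖ := norm_add_le _ _
            _ = ‖x'‖ + t * ‖y - x'‖ := by
                rw [norm_smul, Real.norm_eq_abs, abs_of_nonneg ht0.le]
            _ ≤ r₂ := by linarith
        have hcx := hgconv.2 hx'r hy (by linarith : (0:ℝ) ≤ 1 - t) ht0.le (by ring)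
        simp only [smul_eq_mul] at hcx
        have h5 : g x' ≤ g ((1 - t) • x' + t • y) := hming _ hwpt
        nlinarith
    have hux' : u x' ≤ ε := by
      by_contra h
      push_neg at h
      have hFcont : ContinuousOn (fun t : ℝ => u (t • x')) (Icc 0 1) := by
        apply hcont.comp (Continuous.continuousOn (by continuity))
        intro t ht
        rw [mem_ball_zero_iff, norm_smul, Real.norm_eq_abs,
          abs_of_nonneg ht.1]
        nlinarith [ht.2, norm_nonneg x', hx'lt]
      have hmem : ε ∈ Icc ((fun t : ℝ => u (t • x')) 0) ((fun t : ℝ => u (t • x')) 1) := by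
        simp only [zero_smul, one_smul, hu0]
        exact ⟨hε.le, h.le⟩
      obtain ⟨t, ht, hFt⟩ := intermediate_value_Icc zero_le_one hFcont hmem
      have hFt' : u (t • x') = ε := hFt
      have hzA : t • x' ∈ A := by
        constructor
        · rw [mem_closedBall_zero_iff, norm_smul, Real.norm_eq_abs, abs_of_nonneg ht.1]
          nlinarith [ht.2, norm_nonneg x', hx'lt]
        · exact le_of_eq hFt'
      have hgz : g (t • x') ≤ 0 := by
        have hcx := hgconv.2 (mem_ball_self hr) hx'r
          (by linarith [ht.2] : (0:ℝ) ≤ 1 - t) ht.1 (by ring)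
        simp only [smul_zero, zero_add, smul_eq_mul, hg0, mul_zero] at hcx
        nlinarith [ht.1, hgx']
      have hpz := hpA _ hzA
      have : u (t • x') - ⟪p, t • x'⟫ ≤ 0 := hgz
      rw [hFt'] at this
      linarith
    have hx'R : x' ∈ closedBall (0 : EuclideanSpace ℝ (Fin 2)) R := by
      rw [mem_closedBall_zero_iff]
      have h1 : C₁ * ‖x'‖ ^ 2 ≤ ε := (hlow x' hx'r).trans hux'
      have h2 : ‖x'‖ ^ 2 ≤ R ^ 2 := by
        rw [hRdef]; rw [hεdef] at h1; nlinarith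
      exact le_of_pow_le_pow_left₀ two_ne_zero hR.le h2
    refine mem_biUnion hx'R ?_
    intro y hy
    have h6 : g x' ≤ g y := hglobal y hy
    have h7 : ⟪p, y - x'⟫ = ⟪p, y⟫ - ⟪p, x'⟫ := inner_sub_right _ _ _
    simp only [hgdef] at h6
    linarith
  -- the disjoint balls of slopes
  set c : ℕ → EuclideanSpace ℝ (Fin 2) := fun k => ((2 * (k : ℝ) + 1) * ρ) • w with hcdef
  have hck : ∀ k : ℕ, ‖c k‖ = (2 * (k : ℝ) + 1) * ρ := by
    intro k
    rw [hcdef, norm_smul, hw1, mul_one, Real.norm_eq_abs, abs_of_nonneg (by positivity)]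
  have hsub : ∀ k ∈ Finset.range N, ball (c k) ρ ⊆
      ⋃ y ∈ closedBall (0 : EuclideanSpace ℝ (Fin 2)) R,
        normalMap (ball (0 : EuclideanSpace ℝ (Fin 2)) r) u y := by
    intro k hk p hp
    have hk' : (k : ℝ) ≤ (N : ℝ) - 1 := by
      have : k + 1 ≤ N := Finset.mem_range.mp hk
      have : ((k : ℝ) + 1) ≤ (N : ℝ) := by exact_mod_cast this
      linarith
    have hpc : ‖p - c k‖ < ρ := by
      rw [mem_ball, dist_eq_norm] at hp
      exact hp
    apply hkey
    · have h1 : ‖p‖ ≤ ‖c k‖ + ‖p - c k‖ := by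
        calc ‖p‖ = ‖c k + (p - c k)‖ := by rw [add_sub_cancel]
          _ ≤ ‖c k‖ + ‖p - c k‖ := norm_add_le _ _
      rw [hck k] at h1
      have h2 : (2 * (k : ℝ) + 1) * ρ + ρ ≤ 2 * (N : ℝ) * ρ := by nlinarith
      have h3 : 2 * (N : ℝ) * ρ ≤ C₁ * r₂ / 4 := by
        rw [hρdef]
        have : (N : ℝ) ^ 2 * ‖x‖ ≤ r₂ / 4 := by
          have h4 : (N : ℝ) ^ 2 * ‖x‖ ≤ (N : ℝ) ^ 2 * (r₂ / (4 * (N : ℝ) ^ 2)) :=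
            mul_le_mul_of_nonneg_left hxr₂.le (by positivity)
          have h5 : (N : ℝ) ^ 2 * (r₂ / (4 * (N : ℝ) ^ 2)) = r₂ / 4 := by
            field_simp
          linarith
        nlinarith
      linarith
    · intro z hz
      have h1 : ⟪p, z⟫ = ((2 * (k : ℝ) + 1) * ρ) * ⟪w, z⟫ + ⟪p - c k, z⟫ := by
        have : p = c k + (p - c k) := by rw [add_sub_cancel]
        nth_rewrite 1 [this]
        rw [inner_add_left, hcdef, real_inner_smul_left]
      have h2 : ((2 * (k : ℝ) + 1) * ρ) * ⟪w, z⟫ ≤ ε / 4 := by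
        have hwz := hsep z hz
        have hcoef : 0 ≤ (2 * (k : ℝ) + 1) * ρ := by positivity
        have hcoef2 : (2 * (k : ℝ) + 1) * ρ ≤ 2 * (N : ℝ) * ρ := by nlinarith
        rcases le_or_gt ⟪w, z⟫ 0 with h | h
        · have : ((2 * (k : ℝ) + 1) * ρ) * ⟪w, z⟫ ≤ 0 := mul_nonpos_of_nonneg_of_nonpos hcoef h
          linarith
        · have h3 : ((2 * (k : ℝ) + 1) * ρ) * ⟪w, z⟫ ≤ (2 * (N : ℝ) * ρ) * ‖x‖ := by
            apply mul_le_mul hcoef2 hwz h.le (by positivity)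
          have h4 : (2 * (N : ℝ) * ρ) * ‖x‖ = ε / 4 := by
            rw [hρdef, hεdef]; ring
          linarith
      have h3 : ⟪p - c k, z⟫ ≤ ε / 4 := by
        calc ⟪p - c k, z⟫ ≤ ‖p - c k‖ * ‖z‖ := real_inner_le_norm _ _
          _ ≤ ρ * R := mul_le_mul hpc.le (hAnorm z hz) (norm_nonneg z) hρ.le
          _ = ε / 4 := by rw [hρdef, hRdef, hεdef]; ring
      linarith
  have hdisj : (↑(Finset.range N) : Set ℕ).PairwiseDisjoint fun k => ball (c k) ρ := by
    intro j _ k _ hjk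
    apply ball_disjoint_ball
    rw [dist_eq_norm, hcdef]
    have heq : ((2 * (j : ℝ) + 1) * ρ) • w - ((2 * (k : ℝ) + 1) * ρ) • w
        = ((2 * ((j : ℝ) - (k : ℝ))) * ρ) • w := by
      rw [← sub_smul]; ring_nf
    rw [heq, norm_smul, hw1, mul_one, Real.norm_eq_abs, abs_mul, abs_of_nonneg hρ.le]
    have h1 : (1 : ℝ) ≤ |(j : ℝ) - (k : ℝ)| := by
      rcases hjk.lt_or_gt with h | h
      · have : (j : ℝ) + 1 ≤ (k : ℝ) := by exact_mod_cast h
        rw [abs_sub_comm, abs_of_nonneg (by linarith)]; linarith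
      · have : (k : ℝ) + 1 ≤ (j : ℝ) := by exact_mod_cast h
        rw [abs_of_nonneg (by linarith)]; linarith
    have h2 : |2 * ((j : ℝ) - (k : ℝ))| = 2 * |(j : ℝ) - (k : ℝ)| := by
      rw [abs_mul, abs_two]
    rw [h2]
    nlinarith
  -- volume comparison
  have hKsub : closedBall (0 : EuclideanSpace ℝ (Fin 2)) R ⊆
      ball (0 : EuclideanSpace ℝ (Fin 2)) r := closedBall_subset_ball hRr
  have hMA' := hMA (closedBall (0 : EuclideanSpace ℝ (Fin 2)) R) hKsub measurableSet_closedBall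
  have hUsub : (⋃ k ∈ Finset.range N, ball (c k) ρ) ⊆
      ⋃ y ∈ closedBall (0 : EuclideanSpace ℝ (Fin 2)) R,
        normalMap (ball (0 : EuclideanSpace ℝ (Fin 2)) r) u y := iUnion₂_subset hsub
  have hvol1 : volume (⋃ k ∈ Finset.range N, ball (c k) ρ)
      = ∑ k ∈ Finset.range N, volume (ball (c k) ρ) :=
    measure_biUnion_finset hdisj fun k _ => measurableSet_ball
  have hvball : ∀ k : ℕ, volume (ball (c k) ρ)
      = ENNReal.ofReal (ρ ^ 2) * volume (ball (0 : EuclideanSpace ℝ (Fin 2)) 1) := by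
    intro k
    rw [Measure.addHaar_ball volume (c k) hρ.le, finrank_euclideanSpace_fin]
  have hvK : volume (closedBall (0 : EuclideanSpace ℝ (Fin 2)) R)
      = ENNReal.ofReal (R ^ 2) * volume (ball (0 : EuclideanSpace ℝ (Fin 2)) 1) := by
    rw [Measure.addHaar_closedBall volume _ hR.le, finrank_euclideanSpace_fin]
  set V : ℝ≥0∞ := volume (ball (0 : EuclideanSpace ℝ (Fin 2)) 1) with hVdef
  have hV0 : V ≠ 0 := (measure_ball_pos volume 0 one_pos).ne'
  have hVtop : V ≠ ⊤ := measure_ball_lt_top.ne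
  have hineq : (N : ℝ≥0∞) * (ENNReal.ofReal (ρ ^ 2) * V)
      ≤ ENNReal.ofReal C * (ENNReal.ofReal (R ^ 2) * V) := by
    calc (N : ℝ≥0∞) * (ENNReal.ofReal (ρ ^ 2) * V)
        = ∑ k ∈ Finset.range N, volume (ball (c k) ρ) := by
          rw [Finset.sum_congr rfl fun k _ => hvball k, Finset.sum_const, Finset.card_range,
            nsmul_eq_mul]
      _ = volume (⋃ k ∈ Finset.range N, ball (c k) ρ) := hvol1.symm
      _ ≤ volume (⋃ y ∈ closedBall (0 : EuclideanSpace ℝ (Fin 2)) R,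
            normalMap (ball (0 : EuclideanSpace ℝ (Fin 2)) r) u y) := measure_mono hUsub
      _ ≤ ENNReal.ofReal C * volume (closedBall (0 : EuclideanSpace ℝ (Fin 2)) R) := hMA'
      _ = ENNReal.ofReal C * (ENNReal.ofReal (R ^ 2) * V) := by rw [hvK]
  have hineq2 : (N : ℝ≥0∞) * ENNReal.ofReal (ρ ^ 2)
      ≤ ENNReal.ofReal C * ENNReal.ofReal (R ^ 2) := by
    rw [← mul_assoc, ← mul_assoc] at hineq
    exact (ENNReal.mul_le_mul_iff_left hV0 hVtop).mp hineq
  have hreal : (N : ℝ) * ρ ^ 2 ≤ C * R ^ 2 := by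
    have h1 : ((N : ℕ) : ℝ≥0∞) = ENNReal.ofReal ((N : ℕ) : ℝ) := by
      rw [ENNReal.ofReal_natCast]
    rw [h1, ← ENNReal.ofReal_mul (by positivity), ← ENNReal.ofReal_mul hC] at hineq2
    exact (ENNReal.ofReal_le_ofReal_iff (by positivity)).mp hineq2
  have hfin : (N : ℝ) * C₁ ^ 2 ≤ 16 * C := by
    rw [hρdef, hRdef] at hreal
    have hx2 : 0 < ‖x‖ ^ 2 := by positivity
    have hN2 : 0 < (N : ℝ) ^ 2 := by positivity
    nlinarith [mul_pos hN2 hx2]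
  have : (N : ℝ) ≤ 16 * C / C₁ ^ 2 := by
    rw [le_div_iff₀ (by positivity)]; linarith
  linarith
end
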